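/- arXiv:2312.05088 — 2 statements merged into one kernel-verified Lean document; each statement's English description precedes it below -/
import Mathlib

section
/- Let p, q : ℝⁿ → [1,∞] be measurable exponents with conjugate exponents p′, q′ (defined pointwise by 1/p + 1/p′ = 1, 1/q + 1/q′ = 1). Then for every (f_j)_{j∈ℕ₀} ∈ ℓ^{q(·)}(L^{p(·)}) and (g_j)_{j∈ℕ₀} ∈ ℓ^{q′(·)}(L^{p′(·)}), one has Σ_{j=0}^∞ ∫_{ℝⁿ} |f_j(x)||g_j(x)| dx ≤ c ‖(f_j)_j‖_{ℓ^{q(·)}(L^{p(·)})} ‖(g_j)_j‖_{ℓ^{q′(·)}(L^{p′(·)})}, with constant c independent of the sequences. -/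
open MeasureTheory ENNReal Filter
open scoped SchwartzMap FourierTransform

noncomputable section

/-- Euclidean space ℝⁿ. -/
abbrev En (n : ℕ) := EuclideanSpace ℝ (Fin n)

/-- `ω_p(t)`: `t^p` for finite `p`; for `p = ∞` it is `0` if `t ≤ 1` and `∞` otherwise. -/
def omegaP (p t : ℝ≥0∞) : ℝ≥0∞ :=
  if p = ∞ then (if t ≤ 1 then 0 else ∞) else t ^ p.toReal

/-- Variable exponent modular `ρ_{p(·)}` on nonnegative (ℝ≥0∞-valued) functions. -/
def rhoP {n : ℕ} (p : En n → ℝ≥0∞) (F : En n → ℝ≥0∞) : ℝ≥0∞ :=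
  ∫⁻ x, omegaP (p x) (F x)

/-- Luxemburg norm for the variable exponent Lebesgue space. -/
def luxNorm {n : ℕ} (p : En n → ℝ≥0∞) (F : En n → ℝ≥0∞) : ℝ≥0∞ :=
  sInf {l : ℝ≥0∞ | 0 < l ∧ rhoP p (fun x => F x / l) ≤ 1}

/-- The nonnegative absolute value of a real function, as an ℝ≥0∞-valued function. -/
def nnAbs {n : ℕ} (f : En n → ℝ) : En n → ℝ≥0∞ := fun x => ENNReal.ofReal |f x|

/-- Modular of the mixed Lebesgue-sequence space `ℓ^{q(·)}(L^{p(·)})`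
(convention `λ^{1/∞} = λ^0 = 1`). -/
def mixedModular {n : ℕ} (q p : En n → ℝ≥0∞) (F : ℕ → En n → ℝ≥0∞) : ℝ≥0∞ :=
  ∑' j, sInf {l : ℝ≥0∞ | 0 < l ∧ rhoP p (fun x => F j x / l ^ ((q x)⁻¹).toReal) ≤ 1}

/-- Quasi-norm of the mixed Lebesgue-sequence space `ℓ^{q(·)}(L^{p(·)})`. -/
def mixedNorm {n : ℕ} (q p : En n → ℝ≥0∞) (F : ℕ → En n → ℝ≥0∞) : ℝ≥0∞ :=
  sInf {m : ℝ≥0∞ | 0 < m ∧ mixedModular q p (fun j x => F j x / m) ≤ 1}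

/-- `g` is locally log-Hölder continuous with constant `c`. -/
def LocLogHolder {n : ℕ} (c : ℝ) (g : En n → ℝ) : Prop :=
  0 < c ∧ ∀ x y : En n, |g x - g y| ≤ c / Real.log (Real.exp 1 + 1 / ‖x - y‖)

/-- `g ∈ C^log_loc(ℝⁿ)`. -/
def ClogLoc {n : ℕ} (g : En n → ℝ) : Prop := ∃ c, LocLogHolder c g

/-- `g` is globally log-Hölder continuous: locally log-Hölder plus the log-Hölder
decay condition at infinity. -/
def GlobLogHolder {n : ℕ} (g : En n → ℝ) : Prop :=
  ClogLoc g ∧ ∃ c g_inf : ℝ, 0 < c ∧ ∀ x : En n, |g x - g_inf| ≤ c / Real.log (Real.exp 1 + ‖x‖)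

/-- A measurable variable exponent `p : ℝⁿ → [1,∞]`. -/
def IsExponent {n : ℕ} (p : En n → ℝ≥0∞) : Prop := Measurable p ∧ ∀ x, 1 ≤ p x

/-- `p ∈ 𝒫^log(ℝⁿ)`: a variable exponent with `1/p` globally log-Hölder continuous. -/
def Plog {n : ℕ} (p : En n → ℝ≥0∞) : Prop :=
  IsExponent p ∧ GlobLogHolder (fun x => ((p x)⁻¹).toReal)

/-- Convolution of two real functions. -/
def conv {n : ℕ} (φ f : En n → ℝ) (x : En n) : ℝ := ∫ y, φ (x - y) * f y

/-- Partial derivative in the `k`-th coordinate direction. -/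
def pderiv {n : ℕ} (k : Fin n) (f : En n → ℝ) (x : En n) : ℝ :=
  fderiv ℝ f x (EuclideanSpace.single k 1)

/-- Besov quasi-norm with variable smoothness and integrability, relative to a
system `(φ_j)_j`. -/
def besovNorm {n : ℕ} (φ : ℕ → En n → ℝ) (s : En n → ℝ) (q p : En n → ℝ≥0∞)
    (g : En n → ℝ) : ℝ≥0∞ :=
  mixedNorm q p (fun j x => ENNReal.ofReal ((2:ℝ) ^ ((j:ℝ) * s x) * |conv (φ j) g x|))

/-- A smooth dyadic resolution of unity `(ℱφ_j)_j`. -/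
structure DyadicResolution (n : ℕ) where
  φ : ℕ → 𝓢(En n, ℝ)
  supp_zero : ∀ ξ : En n, 2 < ‖ξ‖ → 𝓕 (fun y => (φ 0 y : ℂ)) ξ = 0
  supp_pos : ∀ j : ℕ, 0 < j → ∀ ξ : En n,
      (‖ξ‖ < (2:ℝ) ^ ((j:ℤ) - 1) ∨ (2:ℝ) ^ ((j:ℤ) + 1) < ‖ξ‖) →
      𝓕 (fun y => (φ j y : ℂ)) ξ = 0
  sum_one : ∀ ξ : En n, ∑' j, 𝓕 (fun y => (φ j y : ℂ)) ξ = 1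

/-- The commutator `[V·∇, Δ_j]f` relative to a convolution kernel `φj`. -/
def commVf {n : ℕ} (φj : En n → ℝ) (V : Fin n → En n → ℝ) (f : En n → ℝ)
    (x : En n) : ℝ :=
  ∑ k, (V k x * pderiv k (conv φj f) x - conv φj (fun y => V k y * pderiv k f y) x)

end


section HolderAux

open MeasureTheory ENNReal

lemma omegaP_mono (P : ℝ≥0∞) {s t : ℝ≥0∞} (h : s ≤ t) : omegaP P s ≤ omegaP P t := by
  unfold omegaP
  split
  · by_cases ht : t ≤ 1
    · rw [if_pos ht, if_pos (h.trans ht)]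
    · rw [if_neg ht]; exact le_top
  · exact ENNReal.rpow_le_rpow h ENNReal.toReal_nonneg

lemma young_omega {P P' : ℝ≥0∞} (hP : 1 ≤ P) (hc : P⁻¹ + P'⁻¹ = 1) (a b : ℝ≥0∞) :
    a * b ≤ omegaP P a + omegaP P' b := by
  have hP0 : P ≠ 0 := by intro h; simp [h] at hP
  by_cases hPtop : P = ∞
  · have hP'1 : P' = 1 := by
      rw [hPtop] at hc; simp at hc
      simpa using congrArg Inv.inv hc
    rw [hPtop, hP'1]
    by_cases ha : a ≤ 1
    · have e1 : omegaP ⊤ a = 0 := by simp [omegaP, ha]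
      have e2 : omegaP 1 b = b := by simp [omegaP]
      rw [e1, e2, zero_add]
      calc a * b ≤ 1 * b := mul_le_mul_left ha b
      _ = b := one_mul b
    · have e1 : omegaP ⊤ a = ∞ := by simp [omegaP, ha]
      rw [e1, top_add]
      exact le_top
  by_cases hP1 : P = 1
  · have hP' : P' = ∞ := by
      rw [hP1] at hc
      have h0 : P'⁻¹ = 0 := by
        refine (ENNReal.add_right_inj (a := (1:ℝ≥0∞)) ENNReal.one_ne_top).mp ?_
        simpa using hc
      simpa using congrArg Inv.inv h0
    rw [hP1, hP']
    by_cases hb : b ≤ 1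
    · have e1 : omegaP ⊤ b = 0 := by simp [omegaP, hb]
      have e2 : omegaP 1 a = a := by simp [omegaP]
      rw [e1, e2, add_zero]
      calc a * b ≤ a * 1 := mul_le_mul_right hb a
      _ = a := mul_one a
    · have e1 : omegaP ⊤ b = ∞ := by simp [omegaP, hb]
      rw [e1, add_top]
      exact le_top
  have hPlt : 1 < P := lt_of_le_of_ne hP (Ne.symm hP1)
  have hP'inv_ne_zero : P'⁻¹ ≠ 0 := by
    intro h
    rw [h, add_zero] at hc
    exact hP1 (by simpa using congrArg Inv.inv hc)
  have hP'top : P' ≠ ∞ := by simpa [ENNReal.inv_ne_zero] using hP'inv_ne_zero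
  have hP'inv_ne_top : P'⁻¹ ≠ ∞ := by
    intro h; rw [h] at hc; simp at hc
  have hP'0 : P' ≠ 0 := by
    intro h; rw [h] at hP'inv_ne_top; simp at hP'inv_ne_top
  have hP'lt : 1 < P' := by
    refine ENNReal.inv_lt_one.mp ?_
    have hne : P⁻¹ ≠ 0 := by simp [hPtop]
    have hle : P'⁻¹ ≤ 1 := by rw [← hc]; exact le_add_self
    refine lt_of_le_of_ne hle ?_
    intro h
    rw [h] at hc
    have : P⁻¹ = 0 := by
      refine (ENNReal.add_right_inj (a := (1:ℝ≥0∞)) ENNReal.one_ne_top).mp ?_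
      rw [add_comm] at hc; simpa using hc
    exact hne this
  have hr : 1 < P.toReal := by
    have := (ENNReal.toReal_lt_toReal ENNReal.one_ne_top hPtop).mpr hPlt
    simpa using this
  have hconj : P.toReal.HolderConjugate P'.toReal := by
    rw [Real.holderConjugate_iff]
    constructor
    · exact hr
    · have h1 : P⁻¹ ≠ ∞ := by simp [hP0]
      have := congrArg ENNReal.toReal hc
      rw [ENNReal.toReal_add h1 hP'inv_ne_top, ENNReal.toReal_inv, ENNReal.toReal_inv] at this
      simpa [one_div] using this
  have hy := ENNReal.young_inequality a b hconj
  unfold omegaP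
  rw [if_neg hPtop, if_neg hP'top]
  refine hy.trans (add_le_add ?_ ?_)
  · refine ENNReal.div_le_of_le_mul ?_
    exact le_mul_of_one_le_right' (by simp [ENNReal.one_le_ofReal]; linarith)
  · have hr' : 1 < P'.toReal := by
      have := (ENNReal.toReal_lt_toReal ENNReal.one_ne_top hP'top).mpr hP'lt
      simpa using this
    refine ENNReal.div_le_of_le_mul ?_
    exact le_mul_of_one_le_right' (by simp [ENNReal.one_le_ofReal]; linarith)

lemma rpow_mul_rpow_le (lam mu : ℝ≥0∞) {a b : ℝ} (ha : 0 ≤ a) (hb : 0 ≤ b) (hab : a + b = 1) :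
    lam ^ a * mu ^ b ≤ lam + mu := by
  calc lam ^ a * mu ^ b ≤ (lam ⊔ mu) ^ a * (lam ⊔ mu) ^ b :=
        mul_le_mul' (ENNReal.rpow_le_rpow le_sup_left ha) (ENNReal.rpow_le_rpow le_sup_right hb)
  _ = (lam ⊔ mu) ^ (a + b) := (ENNReal.rpow_add_of_nonneg _ _ ha hb).symm
  _ = lam ⊔ mu := by rw [hab, ENNReal.rpow_one]
  _ ≤ lam + mu := sup_le le_self_add le_add_self

lemma toReal_inv_conj {Q Q' : ℝ≥0∞} (hQ : 1 ≤ Q) (h : Q⁻¹ + Q'⁻¹ = 1) :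
    (Q⁻¹).toReal + (Q'⁻¹).toReal = 1 := by
  have hQ0 : Q ≠ 0 := by intro hh; simp [hh] at hQ
  have h1 : Q⁻¹ ≠ ∞ := by simp [hQ0]
  have h2 : Q'⁻¹ ≠ ∞ := by
    intro hh; rw [hh] at h; simp at h
  rw [← ENNReal.toReal_add h1 h2, h, ENNReal.toReal_one]

lemma le_two_sInf_add_two_sInf {X : ℝ≥0∞} {S T : Set ℝ≥0∞}
    (h : ∀ l ∈ S, ∀ m ∈ T, X ≤ 2 * l + 2 * m) : X ≤ 2 * sInf S + 2 * sInf T := by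
  rcases S.eq_empty_or_nonempty with rfl | hS
  · simp [sInf_empty]
  rcases T.eq_empty_or_nonempty with rfl | hT
  · simp [sInf_empty]
  have : Nonempty ↥S := hS.to_subtype
  have : Nonempty ↥T := hT.to_subtype
  rw [sInf_eq_iInf', sInf_eq_iInf',
    ENNReal.mul_iInf_of_ne two_ne_zero ENNReal.ofNat_ne_top,
    ENNReal.mul_iInf_of_ne two_ne_zero ENNReal.ofNat_ne_top, ENNReal.iInf_add]
  refine le_iInf fun l => ?_
  rw [ENNReal.add_iInf]
  exact le_iInf fun m => h l l.2 m m.2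

lemma le_four_sInf_mul_sInf {X : ℝ≥0∞} {S T : Set ℝ≥0∞}
    (hS0 : sInf S ≠ 0) (hT0 : sInf T ≠ 0)
    (h : ∀ m ∈ S, ∀ m' ∈ T, X ≤ 4 * m * m') : X ≤ 4 * sInf S * sInf T := by
  rcases S.eq_empty_or_nonempty with rfl | hSne
  · rw [sInf_empty, ENNReal.mul_top (by norm_num), ENNReal.top_mul hT0]; exact le_top
  rcases T.eq_empty_or_nonempty with rfl | hTne
  · rw [sInf_empty, ENNReal.mul_top (mul_ne_zero (by norm_num) hS0)]; exact le_top
  have hne1 : Nonempty ↥S := hSne.to_subtype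
  have hne2 : Nonempty ↥T := hTne.to_subtype
  rw [sInf_eq_iInf'] at hS0 ⊢
  rw [sInf_eq_iInf' (s := T)] at hT0 ⊢
  have e1 : (4:ℝ≥0∞) * ⨅ a : S, (a : ℝ≥0∞) = ⨅ a : S, 4 * (a : ℝ≥0∞) :=
    ENNReal.mul_iInf_of_ne (by norm_num) (by norm_num)
  have e2 : (4 * ⨅ a : S, (a : ℝ≥0∞)) * ⨅ a : T, (a : ℝ≥0∞)
      = ⨅ a : T, (4 * ⨅ b : S, (b : ℝ≥0∞)) * (a : ℝ≥0∞) :=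
    ENNReal.mul_iInf' (fun _ h0 => (hT0 h0).elim) (fun _ => hne2)
  rw [e2]
  refine le_iInf fun m' => ?_
  have e3 : (4 * ⨅ b : S, (b : ℝ≥0∞)) * (m' : ℝ≥0∞)
      = ⨅ b : S, (4 * (b : ℝ≥0∞)) * (m' : ℝ≥0∞) := by
    rw [e1]
    refine ENNReal.iInf_mul' ?_ (fun _ => hne1)
    intro _ h0
    rw [← e1] at h0
    exact absurd h0 (mul_ne_zero (by norm_num) hS0)
  rw [e3]
  exact le_iInf fun m => h m m.2 m' m'.2

lemma measurable_omega {n : ℕ} {p : En n → ℝ≥0∞} (hp : Measurable p)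
    {A : En n → ℝ≥0∞} (hA : Measurable A) :
    Measurable fun x => omegaP (p x) (A x) := by
  have h1 : MeasurableSet {x : En n | p x = ∞} := hp (measurableSet_singleton ∞)
  have h2 : MeasurableSet {x : En n | A x ≤ 1} := hA measurableSet_Iic
  unfold omegaP
  exact Measurable.ite h1 (Measurable.ite h2 measurable_const measurable_const)
    (hA.pow hp.ennreal_toReal)

lemma pair_bound {n : ℕ} {p q p' q' : En n → ℝ≥0∞}
    (hp : IsExponent p) (hq : IsExponent q)
    (hpc : ∀ x, (p x)⁻¹ + (p' x)⁻¹ = 1) (hqc : ∀ x, (q x)⁻¹ + (q' x)⁻¹ = 1)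
    {F G : En n → ℝ≥0∞} (hF : Measurable F)
    {lam mu : ℝ≥0∞} (hlam0 : 0 < lam) (hmu0 : 0 < mu)
    (hlam : rhoP p (fun x => F x / lam ^ ((q x)⁻¹).toReal) ≤ 1)
    (hmu : rhoP p' (fun x => G x / mu ^ ((q' x)⁻¹).toReal) ≤ 1) :
    ∫⁻ x, F x * G x ≤ 2 * lam + 2 * mu := by
  by_cases hlt : lam = ∞
  · rw [hlt, ENNReal.mul_top (by norm_num)]; rw [top_add]; exact le_top
  by_cases hmt : mu = ∞
  · rw [hmt, ENNReal.mul_top (by norm_num)]; rw [add_top]; exact le_top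
  set A : En n → ℝ≥0∞ := fun x => F x / lam ^ ((q x)⁻¹).toReal with hA
  set B : En n → ℝ≥0∞ := fun x => G x / mu ^ ((q' x)⁻¹).toReal with hB
  have key : ∀ x, F x * G x ≤ (lam + mu) * (omegaP (p x) (A x) + omegaP (p' x) (B x)) := by
    intro x
    have ha : (0:ℝ) ≤ ((q x)⁻¹).toReal := ENNReal.toReal_nonneg
    have hb : (0:ℝ) ≤ ((q' x)⁻¹).toReal := ENNReal.toReal_nonneg
    have hab := toReal_inv_conj (hq.2 x) (hqc x)
    have hlne : lam ^ ((q x)⁻¹).toReal ≠ 0 := (ENNReal.rpow_pos hlam0 hlt).ne'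
    have hlnt : lam ^ ((q x)⁻¹).toReal ≠ ∞ := ENNReal.rpow_ne_top_of_nonneg ha hlt
    have hmne : mu ^ ((q' x)⁻¹).toReal ≠ 0 := (ENNReal.rpow_pos hmu0 hmt).ne'
    have hmnt : mu ^ ((q' x)⁻¹).toReal ≠ ∞ := ENNReal.rpow_ne_top_of_nonneg hb hmt
    have eF : F x = A x * lam ^ ((q x)⁻¹).toReal := (ENNReal.div_mul_cancel hlne hlnt).symm
    have eG : G x = B x * mu ^ ((q' x)⁻¹).toReal := (ENNReal.div_mul_cancel hmne hmnt).symm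
    calc F x * G x
        = (A x * B x) * (lam ^ ((q x)⁻¹).toReal * mu ^ ((q' x)⁻¹).toReal) := by
          rw [eF, eG]; ring
    _ ≤ (A x * B x) * (lam + mu) := mul_le_mul_right (rpow_mul_rpow_le lam mu ha hb hab) _
    _ = (lam + mu) * (A x * B x) := mul_comm _ _
    _ ≤ (lam + mu) * (omegaP (p x) (A x) + omegaP (p' x) (B x)) :=
          mul_le_mul_right (young_omega (hp.2 x) (hpc x) (A x) (B x)) _
  have hAmeas : Measurable fun x => omegaP (p x) (A x) := by
    refine measurable_omega hp.1 ?_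
    exact hF.div (Measurable.pow measurable_const
      (hq.1.inv.ennreal_toReal))
  calc ∫⁻ x, F x * G x
      ≤ ∫⁻ x, (lam + mu) * (omegaP (p x) (A x) + omegaP (p' x) (B x)) := lintegral_mono key
  _ = (lam + mu) * ∫⁻ x, (omegaP (p x) (A x) + omegaP (p' x) (B x)) :=
        lintegral_const_mul' _ _ (ENNReal.add_ne_top.mpr ⟨hlt, hmt⟩)
  _ = (lam + mu) * (rhoP p A + rhoP p' B) := by
        rw [lintegral_add_left hAmeas]; rfl
  _ ≤ (lam + mu) * (1 + 1) := mul_le_mul_right (add_le_add hlam hmu) _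
  _ = 2 * lam + 2 * mu := by ring

lemma modular_holder {n : ℕ} {p q p' q' : En n → ℝ≥0∞}
    (hp : IsExponent p) (hq : IsExponent q)
    (hpc : ∀ x, (p x)⁻¹ + (p' x)⁻¹ = 1) (hqc : ∀ x, (q x)⁻¹ + (q' x)⁻¹ = 1)
    (F G : ℕ → En n → ℝ≥0∞) (hF : ∀ j, Measurable (F j)) :
    ∑' j, ∫⁻ x, F j x * G j x ≤ 2 * mixedModular q p F + 2 * mixedModular q' p' G := by
  unfold mixedModular
  rw [← ENNReal.tsum_mul_left, ← ENNReal.tsum_mul_left, ← ENNReal.tsum_add]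
  refine ENNReal.tsum_le_tsum fun j => ?_
  refine le_two_sInf_add_two_sInf ?_
  intro l hl m hm
  exact pair_bound hp hq hpc hqc (hF j) hl.1 hm.1 hl.2 hm.2

lemma ae_zero_of_mixedNorm_zero {n : ℕ} {p q : En n → ℝ≥0∞}
    (hp : IsExponent p) (hq : IsExponent q)
    {F : ℕ → En n → ℝ≥0∞} (hF : ∀ j, Measurable (F j))
    (h0 : mixedNorm q p F = 0) (j : ℕ) : F j =ᵐ[(volume : Measure (En n))] (fun _ => 0) := by
  have key : ∀ c : ℝ≥0∞, 0 < c → c ≠ ∞ → rhoP p (fun x => F j x / c) ≤ 1 := by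
    intro c hc0 hct
    have h2 : (0:ℝ≥0∞) < c / 2 := ENNReal.div_pos hc0.ne' ENNReal.ofNat_ne_top
    have hlt : sInf {m : ℝ≥0∞ | 0 < m ∧
        mixedModular q p (fun k x => F k x / m) ≤ 1} < c / 2 := by
      have h3 : mixedNorm q p F < c / 2 := by rw [h0]; exact h2
      simpa [mixedNorm] using h3
    obtain ⟨m, hm, hmlt⟩ := sInf_lt_iff.mp hlt
    have hmtop : m ≠ ∞ := (hmlt.trans (ENNReal.div_lt_top hct two_ne_zero)).ne
    have hj : sInf {l : ℝ≥0∞ | 0 < l ∧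
        rhoP p (fun x => F j x / m / l ^ ((q x)⁻¹).toReal) ≤ 1} < 2 := by
      refine lt_of_le_of_lt ?_ one_lt_two
      calc sInf {l : ℝ≥0∞ | 0 < l ∧
              rhoP p (fun x => F j x / m / l ^ ((q x)⁻¹).toReal) ≤ 1}
          ≤ mixedModular q p (fun k x => F k x / m) := ENNReal.le_tsum j
      _ ≤ 1 := hm.2
    obtain ⟨l, hl, hllt⟩ := sInf_lt_iff.mp hj
    refine le_trans ?_ hl.2
    refine lintegral_mono fun x => omegaP_mono _ ?_
    show F j x / c ≤ F j x / m / l ^ ((q x)⁻¹).toReal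
    have ha0 : (0:ℝ) ≤ ((q x)⁻¹).toReal := ENNReal.toReal_nonneg
    have ha1 : ((q x)⁻¹).toReal ≤ 1 := by
      have h4 : (q x)⁻¹ ≤ 1 := ENNReal.inv_le_one.mpr (hq.2 x)
      simpa using ENNReal.toReal_mono ENNReal.one_ne_top h4
    have hl2 : l ^ ((q x)⁻¹).toReal ≤ 2 := by
      by_cases hl1 : l ≤ 1
      · exact (ENNReal.rpow_le_one hl1 ha0).trans one_le_two
      · calc l ^ ((q x)⁻¹).toReal ≤ l ^ (1:ℝ) :=
              ENNReal.rpow_le_rpow_of_exponent_le (le_of_not_ge hl1) ha1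
        _ = l := ENNReal.rpow_one l
        _ ≤ 2 := hllt.le
    have hml : m * l ^ ((q x)⁻¹).toReal ≤ c := by
      calc m * l ^ ((q x)⁻¹).toReal ≤ (c / 2) * 2 := mul_le_mul' hmlt.le hl2
      _ = c := ENNReal.div_mul_cancel two_ne_zero ENNReal.ofNat_ne_top
    have heq : F j x / m / l ^ ((q x)⁻¹).toReal = F j x / (m * l ^ ((q x)⁻¹).toReal) := by
      rw [div_eq_mul_inv, div_eq_mul_inv, div_eq_mul_inv, mul_assoc,
        ENNReal.mul_inv (Or.inl hm.1.ne') (Or.inl hmtop)]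
    rw [heq]
    exact ENNReal.div_le_div_left hml _
  have meas_zero : ∀ t : ℝ≥0∞, 0 < t → t ≠ ∞ →
      (volume : Measure (En n)) {x : En n | t ≤ F j x} = 0 := by
    intro t ht0 htt
    have hbound : ∀ ε : NNReal, 0 < ε → (volume : Measure (En n)) {x : En n | t ≤ F j x} ≤ ε := by
      intro ε hε
      set c : ℝ≥0∞ := min ((ε : ℝ≥0∞) * t) (t / 2) with hc
      have hc0 : 0 < c := lt_min (ENNReal.mul_pos (by exact_mod_cast hε.ne') ht0.ne')
        (ENNReal.div_pos ht0.ne' ENNReal.ofNat_ne_top)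
      have hclt : c < t := lt_of_le_of_lt (min_le_right _ _) (ENNReal.half_lt_self ht0.ne' htt)
      have hctop : c ≠ ∞ := (hclt.trans (lt_top_iff_ne_top.mpr htt)).ne
      have hW : Measurable fun x => omegaP (p x) (F j x / c) :=
        measurable_omega hp.1 ((hF j).div_const c)
      have hint : ∫⁻ x, omegaP (p x) (F j x / c) ≤ 1 := key c hc0 hctop
      have hone : 1 < t / c := by
        rw [ENNReal.lt_div_iff_mul_lt (Or.inl hc0.ne') (Or.inl hctop), one_mul]
        exact hclt
      have hsub : {x : En n | t ≤ F j x} ⊆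
          {x : En n | t / c ≤ omegaP (p x) (F j x / c)} := by
        intro x hx
        have hy : t / c ≤ F j x / c := ENNReal.div_le_div_right hx c
        have h1y : 1 ≤ F j x / c := hone.le.trans hy
        by_cases hpx : p x = ∞
        · have hno : ¬ (F j x / c ≤ 1) := not_le.mpr (lt_of_lt_of_le hone hy)
          simp only [Set.mem_setOf_eq, omegaP, if_pos hpx, if_neg hno]
          exact le_top
        · simp only [Set.mem_setOf_eq, omegaP, if_neg hpx]
          have hr1 : 1 ≤ (p x).toReal := by
            simpa using ENNReal.toReal_mono hpx (hp.2 x)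
          calc t / c ≤ F j x / c := hy
          _ = (F j x / c) ^ (1:ℝ) := (ENNReal.rpow_one _).symm
          _ ≤ (F j x / c) ^ (p x).toReal := ENNReal.rpow_le_rpow_of_exponent_le h1y hr1
      have h5 : (t / c) * (volume : Measure (En n))
          {x : En n | t / c ≤ omegaP (p x) (F j x / c)} ≤ 1 :=
        le_trans (mul_meas_ge_le_lintegral₀ hW.aemeasurable (t / c)) hint
      have h6 : (volume : Measure (En n)) {x : En n | t ≤ F j x} ≤ c / t := by
        calc (volume : Measure (En n)) {x : En n | t ≤ F j x}
            ≤ (volume : Measure (En n)) {x : En n | t / c ≤ omegaP (p x) (F j x / c)} :=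
              measure_mono hsub
        _ ≤ 1 / (t / c) := by
              rw [ENNReal.le_div_iff_mul_le (Or.inl (ENNReal.div_pos ht0.ne' hctop).ne')
                (Or.inr ENNReal.one_ne_top)]
              rw [mul_comm]
              exact h5
        _ = c / t := by
              rw [one_div, ENNReal.inv_div (Or.inl hctop) (Or.inl hc0.ne')]
      refine h6.trans ?_
      calc c / t ≤ ((ε : ℝ≥0∞) * t) / t := ENNReal.div_le_div_right (min_le_left _ _) t
      _ = (ε : ℝ≥0∞) * (t / t) := mul_div_assoc _ _ _
      _ = (ε : ℝ≥0∞) := by rw [ENNReal.div_self ht0.ne' htt, mul_one]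
    refine le_antisymm ?_ (zero_le)
    refine ENNReal.le_of_forall_pos_le_add fun ε hε _ => ?_
    rw [zero_add]
    exact hbound ε hε
  have hnull : (volume : Measure (En n)) {x : En n | F j x ≠ 0} = 0 := by
    have hsub : {x : En n | F j x ≠ 0} ⊆
        ⋃ k : ℕ, {x : En n | ((k : ℝ≥0∞) + 1)⁻¹ ≤ F j x} := by
      intro x hx
      obtain ⟨k, hk⟩ := ENNReal.exists_inv_nat_lt hx
      refine Set.mem_iUnion.mpr ⟨k, ?_⟩
      have h7 : ((k : ℝ≥0∞) + 1)⁻¹ ≤ ((k : ℝ≥0∞))⁻¹ := ENNReal.inv_le_inv' le_self_add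
      exact (lt_of_le_of_lt h7 hk).le
    refine measure_mono_null hsub (measure_iUnion_null fun k => meas_zero _ ?_ ?_)
    · exact ENNReal.inv_pos.mpr (ENNReal.add_ne_top.mpr ⟨ENNReal.natCast_ne_top k, ENNReal.one_ne_top⟩)
    · rw [Ne, ENNReal.inv_eq_top]
      simp
  rw [Filter.EventuallyEq, ae_iff]
  simpa using hnull

end HolderAux

/-- Hölder-type inequality for the mixed Lebesgue-sequence spaces. -/
theorem stmt5 {n : ℕ} (p q p' q' : En n → ℝ≥0∞)
    (hp : IsExponent p) (hq : IsExponent q) (hp' : Measurable p') (hq' : Measurable q')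
    (hpc : ∀ x, (p x)⁻¹ + (p' x)⁻¹ = 1) (hqc : ∀ x, (q x)⁻¹ + (q' x)⁻¹ = 1) :
    ∃ c : ℝ≥0∞, c ≠ ∞ ∧ ∀ f g : ℕ → En n → ℝ,
      (∀ j, Measurable (f j)) → (∀ j, Measurable (g j)) →
      ∑' j, ∫⁻ x, nnAbs (f j) x * nnAbs (g j) x ≤
        c * mixedNorm q p (fun j => nnAbs (f j)) * mixedNorm q' p' (fun j => nnAbs (g j)) := by
  refine ⟨4, by norm_num, ?_⟩
  intro f g hfm hgm
  have hFm : ∀ j, Measurable (nnAbs (f j)) := by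
    intro j
    have h1 : Measurable fun x => ENNReal.ofReal ‖f j x‖ := ((hfm j).norm).ennreal_ofReal
    simp only [Real.norm_eq_abs] at h1; exact h1
  have hGm : ∀ j, Measurable (nnAbs (g j)) := by
    intro j
    have h1 : Measurable fun x => ENNReal.ofReal ‖g j x‖ := ((hgm j).norm).ennreal_ofReal
    simp only [Real.norm_eq_abs] at h1; exact h1
  set Fs : ℕ → En n → ℝ≥0∞ := fun j => nnAbs (f j) with hFs
  set Gs : ℕ → En n → ℝ≥0∞ := fun j => nnAbs (g j) with hGs
  have hp'e : IsExponent p' :=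
    ⟨hp', fun x => ENNReal.inv_le_one.mp (by rw [← hpc x]; exact le_add_self)⟩
  have hq'e : IsExponent q' :=
    ⟨hq', fun x => ENNReal.inv_le_one.mp (by rw [← hqc x]; exact le_add_self)⟩
  by_cases hM : mixedNorm q p Fs = 0
  · have hz := ae_zero_of_mixedNorm_zero hp hq hFm hM
    have hzero : ∀ j, ∫⁻ x, Fs j x * Gs j x = 0 := by
      intro j
      have hae : (fun x => Fs j x * Gs j x) =ᵐ[(volume : Measure (En n))] (fun _ => 0) :=
        (hz j).mono fun x hx => by
          have hx0 : Fs j x = 0 := hx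
          show Fs j x * Gs j x = 0
          rw [hx0, zero_mul]
      rw [lintegral_congr_ae hae, lintegral_zero]
    calc ∑' j, ∫⁻ x, Fs j x * Gs j x = 0 := by simp [hzero]
    _ ≤ _ := zero_le
  by_cases hM' : mixedNorm q' p' Gs = 0
  · have hz := ae_zero_of_mixedNorm_zero hp'e hq'e hGm hM'
    have hzero : ∀ j, ∫⁻ x, Fs j x * Gs j x = 0 := by
      intro j
      have hae : (fun x => Fs j x * Gs j x) =ᵐ[(volume : Measure (En n))] (fun _ => 0) :=
        (hz j).mono fun x hx => by
          have hx0 : Gs j x = 0 := hx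
          show Fs j x * Gs j x = 0
          rw [hx0, mul_zero]
      rw [lintegral_congr_ae hae, lintegral_zero]
    calc ∑' j, ∫⁻ x, Fs j x * Gs j x = 0 := by simp [hzero]
    _ ≤ _ := zero_le
  unfold mixedNorm at hM hM' ⊢
  refine le_four_sInf_mul_sInf hM hM' ?_
  intro m hm m' hm'
  by_cases hmt : m = ∞
  · rw [hmt, ENNReal.mul_top (by norm_num), ENNReal.top_mul hm'.1.ne']; exact le_top
  by_cases hm't : m' = ∞
  · rw [hm't, ENNReal.mul_top (mul_ne_zero (by norm_num) hm.1.ne')]; exact le_top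
  have hmm' : m * m' ≠ ∞ := ENNReal.mul_ne_top hmt hm't
  have ej : ∀ jj : ℕ, ∫⁻ x, Fs jj x * Gs jj x
      = (m * m') * ∫⁻ x, (Fs jj x / m) * (Gs jj x / m') := by
    intro jj
    rw [← lintegral_const_mul' _ _ hmm']
    refine lintegral_congr fun x => ?_
    calc Fs jj x * Gs jj x = (Fs jj x / m * m) * (Gs jj x / m' * m') := by
          rw [ENNReal.div_mul_cancel hm.1.ne' hmt, ENNReal.div_mul_cancel hm'.1.ne' hm't]
    _ = m * m' * (Fs jj x / m * (Gs jj x / m')) := by ring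
  have hFm2 : ∀ jj : ℕ, Measurable fun x => Fs jj x / m := fun jj => (hFm jj).div_const m
  calc ∑' jj, ∫⁻ x, Fs jj x * Gs jj x
      = ∑' jj, (m * m') * ∫⁻ x, (Fs jj x / m) * (Gs jj x / m') := tsum_congr ej
  _ = (m * m') * ∑' jj, ∫⁻ x, (Fs jj x / m) * (Gs jj x / m') := ENNReal.tsum_mul_left
  _ ≤ (m * m') * (2 * mixedModular q p (fun jj x => Fs jj x / m)
        + 2 * mixedModular q' p' (fun jj x => Gs jj x / m')) :=
      mul_le_mul_right (modular_holder hp hq hpc hqc _ _ hFm2) _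
  _ ≤ (m * m') * (2 * 1 + 2 * 1) :=
      mul_le_mul_right (add_le_add (mul_le_mul_right hm.2 _) (mul_le_mul_right hm'.2 _)) _
  _ = 4 * m * m' := by ring
end

section
/- Let p with p⁺ < ∞, q : ℝⁿ → [1,∞] measurable, and let (f_j)_j ∈ ℓ^{q(·)}(L^{p(·)}) be nonnegative with K := ‖(f_j)_j‖ > 0 and each f_j ≠ 0. Define β_j := inf{λ_j > 0 : ρ_{p(·)}(f_j/(K λ_j^{1/q(·)})) ≤ 1}. Then Σ_{j=0}^∞ β_j = 1 and ρ_{p(·)}(f_j/(K β_j^{1/q(·)})) = 1 for every j ∈ ℕ₀. -/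
open MeasureTheory ENNReal Filter
open scoped SchwartzMap FourierTransform

noncomputable section Stmt7Aux

open MeasureTheory ENNReal

lemma omegaP_mono_s7 {P : ℝ≥0∞} : Monotone (omegaP P) := by
  intro s t hst
  unfold omegaP
  split_ifs with h hs ht ht2
  · exact le_rfl
  · exact zero_le
  · exact absurd (hst.trans ht2) hs
  · exact le_rfl
  · exact ENNReal.rpow_le_rpow hst ENNReal.toReal_nonneg

lemma rpow_iInf' {t : ℕ → ℝ≥0∞} {y : ℝ} (hy : 0 < y) :
    (⨅ k, t k) ^ y = ⨅ k, t k ^ y := by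
  have h := (ENNReal.orderIsoRpow y hy).map_iInf t
  simp only [ENNReal.orderIsoRpow_apply] at h
  exact h

lemma rpow_iSup' {t : ℕ → ℝ≥0∞} {y : ℝ} (hy : 0 < y) :
    (⨆ k, t k) ^ y = ⨆ k, t k ^ y := by
  have h := (ENNReal.orderIsoRpow y hy).map_iSup t
  simp only [ENNReal.orderIsoRpow_apply] at h
  exact h

lemma omegaP_iSup {P : ℝ≥0∞} (hP : 1 ≤ P) (t : ℕ → ℝ≥0∞) :
    omegaP P (⨆ k, t k) = ⨆ k, omegaP P (t k) := by
  by_cases h : P = ∞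
  · simp only [omegaP, if_pos h]
    by_cases hle : (⨆ k, t k) ≤ 1
    · rw [if_pos hle]
      refine (le_antisymm (iSup_le fun k => ?_) zero_le).symm
      rw [if_pos ((le_iSup t k).trans hle)]
    · rw [if_neg hle]
      push_neg at hle
      obtain ⟨k, hk⟩ := lt_iSup_iff.mp hle
      refine (le_antisymm le_top (le_iSup_of_le k ?_)).symm
      rw [if_neg (not_le.mpr hk)]
  · simp only [omegaP, if_neg h]
    exact rpow_iSup' (lt_of_lt_of_le one_pos
      (by rw [← ENNReal.toReal_one]; exact ENNReal.toReal_mono h hP))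

lemma measurable_omegaP {n : ℕ} {p : En n → ℝ≥0∞} (hp : Measurable p)
    {G : En n → ℝ≥0∞} (hG : Measurable G) :
    Measurable fun x => omegaP (p x) (G x) := by
  unfold omegaP
  refine Measurable.ite (hp (measurableSet_singleton ∞)) ?_ (hG.pow hp.ennreal_toReal)
  exact Measurable.ite (hG measurableSet_Iic) measurable_const measurable_const

/-- The exponent `(1/q(x))` as a real number. -/
def rE {n : ℕ} (q : En n → ℝ≥0∞) (x : En n) : ℝ := ((q x)⁻¹).toReal

/-- `ρ_{p(·)}(G/(m λ^{1/q(·)}))`. -/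
def psiM {n : ℕ} (p q : En n → ℝ≥0∞) (G : En n → ℝ≥0∞) (m l : ℝ≥0∞) : ℝ≥0∞ :=
  rhoP p (fun x => G x / (m * l ^ rE q x))

/-- The `j`-th summand of the mixed modular, at scaling parameter `m`. -/
def BM {n : ℕ} (p q : En n → ℝ≥0∞) (G : En n → ℝ≥0∞) (m : ℝ≥0∞) : ℝ≥0∞ :=
  sInf {l : ℝ≥0∞ | 0 < l ∧ psiM p q G m l ≤ 1}

variable {n : ℕ} {p q : En n → ℝ≥0∞} {G : En n → ℝ≥0∞}

lemma rE_nonneg (x : En n) : 0 ≤ rE q x := ENNReal.toReal_nonneg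

lemma measurable_argM (hq : Measurable q) (hG : Measurable G) (m l : ℝ≥0∞) :
    Measurable fun x => G x / (m * l ^ rE q x) :=
  hG.div (measurable_const.mul (measurable_const.pow hq.inv.ennreal_toReal))

lemma psiM_anti {m m' l l' : ℝ≥0∞} (hm : m ≤ m') (hl : l ≤ l') :
    psiM p q G m' l' ≤ psiM p q G m l :=
  lintegral_mono fun x => omegaP_mono_s7 (ENNReal.div_le_div_left
    (mul_le_mul' hm (ENNReal.rpow_le_rpow hl (rE_nonneg x))) _)

lemma psiM_le_of_BM_lt {m l : ℝ≥0∞} (h : BM p q G m < l) : psiM p q G m l ≤ 1 := by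
  obtain ⟨l', ⟨hl'0, hl'1⟩, hl'l⟩ := sInf_lt_iff.mp h
  exact le_trans (psiM_anti le_rfl hl'l.le) hl'1

lemma psiM_le_of_gt (hp : Measurable p) (hpl : ∀ x, 1 ≤ p x) (hq : Measurable q)
    (hG : Measurable G) {m l : ℝ≥0∞} (hm0 : m ≠ 0) (hm : m ≠ ∞) (hl : l ≠ ∞)
    (h : ∀ l', l < l' → psiM p q G m l' ≤ 1) : psiM p q G m l ≤ 1 := by
  set c : ℕ → ℝ≥0∞ := fun k => l + ((k : ℝ≥0∞) + 1)⁻¹ with hc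
  have hclt : ∀ k, l < c k := fun k =>
    ENNReal.lt_add_right hl (by simp)
  have hcanti : ∀ k k', k ≤ k' → c k' ≤ c k := by
    intro k k' hkk
    refine add_le_add_right (ENNReal.inv_le_inv.mpr ?_) l
    exact add_le_add_left (by exact_mod_cast hkk) 1
  have key : ∀ x, (⨆ k, G x / (m * c k ^ rE q x)) = G x / (m * l ^ rE q x) := by
    intro x
    have hr : 0 ≤ rE q x := rE_nonneg x
    have hinf : (⨅ k, c k ^ rE q x) = l ^ rE q x := by
      rcases eq_or_lt_of_le hr with h0 | hrpos
      · simp [← h0]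
      · have hiInfc : (⨅ k, c k) = l := by
          refine le_antisymm ?_ (le_iInf fun k => le_self_add)
          refine ENNReal.le_of_forall_pos_le_add fun ε hε _ => ?_
          obtain ⟨k, hk⟩ := ENNReal.exists_inv_nat_lt
            (show ((ε : ℝ≥0∞)) ≠ 0 by exact_mod_cast hε.ne')
          refine iInf_le_of_le k (add_le_add_right (le_of_lt (lt_of_le_of_lt ?_ hk)) l)
          exact ENNReal.inv_le_inv.mpr (le_add_of_nonneg_right zero_le)
        rw [← hiInfc]
        exact (rpow_iInf' hrpos).symm
    calc (⨆ k, G x / (m * c k ^ rE q x))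
        = ⨆ k, G x * (m * c k ^ rE q x)⁻¹ := by simp only [div_eq_mul_inv]
      _ = G x * ⨆ k, (m * c k ^ rE q x)⁻¹ := (ENNReal.mul_iSup _ _).symm
      _ = G x * (⨅ k, m * c k ^ rE q x)⁻¹ := by rw [ENNReal.inv_iInf]
      _ = G x * (m * l ^ rE q x)⁻¹ := by
          rw [← ENNReal.mul_iInf_of_ne hm0 hm, hinf]
      _ = G x / (m * l ^ rE q x) := (div_eq_mul_inv _ _).symm
  have hmono : Monotone fun k => fun x => omegaP (p x) (G x / (m * c k ^ rE q x)) :=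
    fun k k' hkk x => omegaP_mono_s7 (ENNReal.div_le_div_left
      (mul_le_mul' le_rfl (ENNReal.rpow_le_rpow (hcanti k k' hkk) (rE_nonneg x))) _)
  have hMCT := lintegral_iSup (μ := (volume : MeasureTheory.Measure (En n)))
    (fun k => measurable_omegaP hp (measurable_argM hq hG m (c k))) hmono
  have : psiM p q G m l = ⨆ k, psiM p q G m (c k) := by
    unfold psiM rhoP
    rw [← hMCT]
    refine lintegral_congr fun x => ?_
    dsimp only
    rw [← key x, omegaP_iSup (hpl x)]
  rw [this]
  exact iSup_le fun k => h (c k) (hclt k)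

lemma psiM_zero_gt (hp : Measurable p) (hpl : ∀ x, 1 ≤ p x)
    (hpb : essSup p volume ≠ ∞) (hql : ∀ x, 1 ≤ q x) (hqb : essSup q volume ≠ ∞)
    (hG : Measurable G) (hGpos : volume {x | G x ≠ 0} ≠ 0) (m : ℝ≥0∞) :
    ¬ psiM p q G m 0 ≤ 1 := by
  have hae : ∀ᵐ x ∂(volume : Measure (En n)), x ∈ {x | G x ≠ 0} →
      (∞ : ℝ≥0∞) = omegaP (p x) (G x / (m * (0 : ℝ≥0∞) ^ rE q x)) := by
    filter_upwards [ENNReal.ae_le_essSup p, ENNReal.ae_le_essSup q]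
      with x hpx hqx hx
    have hpfin : p x ≠ ∞ := ne_top_of_le_ne_top hpb hpx
    have hqfin : q x ≠ ∞ := ne_top_of_le_ne_top hqb hqx
    have hr : 0 < rE q x := by
      rw [rE, ENNReal.toReal_inv]
      exact inv_pos.mpr (ENNReal.toReal_pos (lt_of_lt_of_le one_pos (hql x)).ne' hqfin)
    rw [ENNReal.zero_rpow_of_pos hr, mul_zero, ENNReal.div_zero hx]
    unfold omegaP
    rw [if_neg hpfin]
    exact (ENNReal.top_rpow_of_pos (lt_of_lt_of_le one_pos
      (by rw [← ENNReal.toReal_one]; exact ENNReal.toReal_mono hpfin (hpl x)))).symm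
  intro hle
  have hA : MeasurableSet {x | G x ≠ 0} :=
    (hG (measurableSet_singleton 0)).compl
  have hbig : (∞ : ℝ≥0∞) * volume {x | G x ≠ 0} ≤ psiM p q G m 0 := by
    rw [← setLIntegral_const {x | G x ≠ 0} ∞]
    rw [setLIntegral_congr_fun_ae hA hae]
    exact setLIntegral_le_lintegral _ _
  rw [ENNReal.top_mul hGpos] at hbig
  simpa using hbig.trans hle

lemma psiM_smul_le (hpl : ∀ x, 1 ≤ p x) (hql : ∀ x, 1 ≤ q x)
    (hpb : essSup p volume ≠ ∞) {θ : ℝ≥0∞} (hθ0 : θ ≠ 0) (hθ1 : θ ≤ 1) (m l : ℝ≥0∞) :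
    psiM p q G m (θ * l) ≤ θ⁻¹ ^ (essSup p volume).toReal * psiM p q G m l := by
  set P' := (essSup p volume).toReal with hP'
  have hθt : θ ≠ ∞ := ne_top_of_le_ne_top one_ne_top hθ1
  have hconst_ne : θ⁻¹ ^ P' ≠ ∞ :=
    ENNReal.rpow_ne_top_of_nonneg ENNReal.toReal_nonneg (by simp [hθ0])
  unfold psiM rhoP
  rw [← lintegral_const_mul' _ _ hconst_ne]
  apply lintegral_mono_ae
  filter_upwards [ENNReal.ae_le_essSup p] with x hpx
  have hr0 : 0 ≤ rE q x := rE_nonneg x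
  have hr1 : rE q x ≤ 1 := by
    rw [rE]
    calc ((q x)⁻¹).toReal ≤ (1 : ℝ≥0∞).toReal :=
      ENNReal.toReal_mono one_ne_top (ENNReal.inv_le_one.mpr (hql x))
    _ = 1 := ENNReal.toReal_one
  have hpfin : p x ≠ ∞ := ne_top_of_le_ne_top hpb hpx
  have harg : G x / (m * (θ * l) ^ rE q x) = G x / (m * l ^ rE q x) * θ⁻¹ ^ rE q x := by
    have hθr0 : θ ^ rE q x ≠ 0 := by
      simp only [ne_eq, ENNReal.rpow_eq_zero_iff, not_or]
      exact ⟨fun hh => hθ0 hh.1, fun hh => hθt hh.1⟩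
    have hθrt : θ ^ rE q x ≠ ∞ := ENNReal.rpow_ne_top_of_nonneg hr0 hθt
    rw [ENNReal.mul_rpow_of_nonneg _ _ hr0, ENNReal.inv_rpow,
      show m * (θ ^ rE q x * l ^ rE q x) = θ ^ rE q x * (m * l ^ rE q x) by ring,
      div_eq_mul_inv, div_eq_mul_inv, ENNReal.mul_inv (Or.inl hθr0) (Or.inl hθrt)]
    ring
  rw [harg]
  simp only [omegaP, if_neg hpfin]
  have h1θ : (1 : ℝ≥0∞) ≤ θ⁻¹ := ENNReal.one_le_inv.mpr hθ1
  calc (G x / (m * l ^ rE q x) * θ⁻¹ ^ rE q x) ^ (p x).toReal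
      = (G x / (m * l ^ rE q x)) ^ (p x).toReal * (θ⁻¹ ^ rE q x) ^ (p x).toReal :=
        ENNReal.mul_rpow_of_nonneg _ _ ENNReal.toReal_nonneg
    _ = (G x / (m * l ^ rE q x)) ^ (p x).toReal * θ⁻¹ ^ (rE q x * (p x).toReal) := by
        rw [← ENNReal.rpow_mul]
    _ ≤ (G x / (m * l ^ rE q x)) ^ (p x).toReal * θ⁻¹ ^ P' := by
        refine mul_le_mul_right (ENNReal.rpow_le_rpow_of_exponent_le h1θ ?_) _
        calc rE q x * (p x).toReal ≤ 1 * (p x).toReal :=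
              mul_le_mul_of_nonneg_right hr1 ENNReal.toReal_nonneg
          _ = (p x).toReal := one_mul _
          _ ≤ P' := ENNReal.toReal_mono hpb hpx
    _ = θ⁻¹ ^ P' * (G x / (m * l ^ rE q x)) ^ (p x).toReal := mul_comm _ _

lemma psiM_pow_le (hql : ∀ x, 1 ≤ q x) (hqb : essSup q volume ≠ ∞)
    {c : ℝ≥0∞} (hc1 : 1 ≤ c) (hc : c ≠ ∞) (m l : ℝ≥0∞) :
    psiM p q G m (c ^ (essSup q volume).toReal * l) ≤ psiM p q G (c * m) l := by
  set Q' := (essSup q volume).toReal with hQ'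
  apply lintegral_mono_ae
  filter_upwards [ENNReal.ae_le_essSup q] with x hqx
  apply omegaP_mono_s7
  apply ENNReal.div_le_div_left
  have hqfin : q x ≠ ∞ := ne_top_of_le_ne_top hqb hqx
  have hq1' : (1 : ℝ) ≤ (q x).toReal := by
    rw [← ENNReal.toReal_one]; exact ENNReal.toReal_mono hqfin (hql x)
  have hq0 : (0 : ℝ) < (q x).toReal := lt_of_lt_of_le one_pos hq1'
  have hrq : 1 ≤ Q' * rE q x := by
    rw [rE, ENNReal.toReal_inv]
    calc (1 : ℝ) = (q x).toReal * ((q x).toReal)⁻¹ := (mul_inv_cancel₀ hq0.ne').symm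
      _ ≤ Q' * ((q x).toReal)⁻¹ :=
          mul_le_mul_of_nonneg_right (ENNReal.toReal_mono hqb hqx) (inv_nonneg.mpr hq0.le)
  calc c * m * l ^ rE q x = m * (c * l ^ rE q x) := by ring
    _ ≤ m * (c ^ (Q' * rE q x) * l ^ rE q x) := by
        refine mul_le_mul_right (mul_le_mul_left ?_ _) m
        calc c = c ^ (1 : ℝ) := (ENNReal.rpow_one c).symm
          _ ≤ c ^ (Q' * rE q x) := ENNReal.rpow_le_rpow_of_exponent_le hc1 hrq
    _ = m * ((c ^ Q' * l) ^ rE q x) := by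
        rw [ENNReal.mul_rpow_of_nonneg _ _ (rE_nonneg x), ← ENNReal.rpow_mul]

lemma BM_le_pow_mul (hql : ∀ x, 1 ≤ q x) (hqb : essSup q volume ≠ ∞)
    {c : ℝ≥0∞} (hc1 : 1 ≤ c) (hc : c ≠ ∞) (m : ℝ≥0∞) :
    BM p q G m ≤ c ^ (essSup q volume).toReal * BM p q G (c * m) := by
  set Q' := (essSup q volume).toReal with hQ'
  set d := c ^ Q' with hd
  have hd0 : d ≠ 0 := (ENNReal.rpow_pos (lt_of_lt_of_le one_pos hc1) hc).ne'
  have hdt : d ≠ ∞ := ENNReal.rpow_ne_top_of_nonneg ENNReal.toReal_nonneg hc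
  have hstep : BM p q G m / d ≤ BM p q G (c * m) := by
    refine le_sInf ?_
    rintro l ⟨hl0, hl1⟩
    rw [ENNReal.div_le_iff hd0 hdt]
    refine sInf_le ⟨?_, ?_⟩
    · exact ENNReal.mul_pos hl0.ne' hd0
    · rw [mul_comm l d]
      exact le_trans (psiM_pow_le hql hqb hc1 hc m l) hl1
  have := (ENNReal.div_le_iff hd0 hdt).mp hstep
  rwa [mul_comm] at this

end Stmt7Aux

/-- sharp attainment of the mixed norm in the modular when
`p⁺ < ∞` and `q⁺ < ∞`. -/
theorem stmt7 {n : ℕ} (p q : En n → ℝ≥0∞) (hp : IsExponent p) (hq : IsExponent q)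
    (hpb : essSup p volume ≠ ∞) (hqb : essSup q volume ≠ ∞)
    (f : ℕ → En n → ℝ) (hfm : ∀ j, Measurable (f j)) (hfnn : ∀ j x, 0 ≤ f j x)
    (hK : 0 < mixedNorm q p (fun j => nnAbs (f j)))
    (hKfin : mixedNorm q p (fun j => nnAbs (f j)) ≠ ∞)
    (hne : ∀ j, ¬ (f j =ᵐ[volume] 0)) :
    (∑' j, sInf {l : ℝ≥0∞ | 0 < l ∧
        rhoP p (fun x => nnAbs (f j) x /
          (mixedNorm q p (fun j => nnAbs (f j)) * l ^ ((q x)⁻¹).toReal)) ≤ 1}) = 1 ∧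
    ∀ j, rhoP p (fun x => nnAbs (f j) x /
        (mixedNorm q p (fun j => nnAbs (f j)) *
          (sInf {l : ℝ≥0∞ | 0 < l ∧
            rhoP p (fun x => nnAbs (f j) x /
              (mixedNorm q p (fun j => nnAbs (f j)) * l ^ ((q x)⁻¹).toReal)) ≤ 1})
            ^ ((q x)⁻¹).toReal)) = 1 := by
  classical
  obtain ⟨hpm, hpl⟩ := hp
  obtain ⟨hqm, hql⟩ := hq
  set K := mixedNorm q p (fun j => nnAbs (f j)) with hKdef
  suffices H : (∑' j, BM p q (nnAbs (f j)) K) = 1 ∧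
      ∀ j, psiM p q (nnAbs (f j)) K (BM p q (nnAbs (f j)) K) = 1 by
    exact H
  -- basic facts
  have hG : ∀ j, Measurable (nnAbs (f j)) := fun j => ((hfm j).abs).ennreal_ofReal
  have hGpos : ∀ j, volume {x | nnAbs (f j) x ≠ 0} ≠ 0 := by
    intro j hzero
    apply hne j
    have hset : {x | nnAbs (f j) x ≠ 0} = {x | f j x ≠ 0} := by
      ext x
      simp [nnAbs, ENNReal.ofReal_eq_zero, abs_nonpos_iff]
    refine ae_iff.mpr ?_
    simpa [hset] using hzero
  have hμvol : (volume : Measure (En n)) ≠ 0 := by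
    intro h0
    exact hne 0 (ae_iff.mpr (by simp [h0]))
  have h1p : 1 ≤ essSup p volume := by
    have h := essSup_mono_ae (μ := volume) (f := fun _ : En n => (1 : ℝ≥0∞)) (g := p)
      (Filter.Eventually.of_forall hpl)
    rwa [essSup_const _ hμvol] at h
  have h1q : 1 ≤ essSup q volume := by
    have h := essSup_mono_ae (μ := volume) (f := fun _ : En n => (1 : ℝ≥0∞)) (g := q)
      (Filter.Eventually.of_forall hql)
    rwa [essSup_const _ hμvol] at h
  have hP'pos : 0 < (essSup p volume).toReal :=
    ENNReal.toReal_pos (lt_of_lt_of_le one_pos h1p).ne' hpb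
  have hQ'pos : 0 < (essSup q volume).toReal :=
    ENNReal.toReal_pos (lt_of_lt_of_le one_pos h1q).ne' hqb
  -- rewriting the mixed modular in terms of `BM`
  have hmod : ∀ m : ℝ≥0∞, m ≠ 0 → m ≠ ∞ →
      mixedModular q p (fun j x => nnAbs (f j) x / m) = ∑' j, BM p q (nnAbs (f j)) m := by
    intro m hm0 hm
    unfold mixedModular BM psiM
    congr 1
    funext j
    congr 1
    ext l
    simp only [Set.mem_setOf_eq]
    have harg : (fun x => nnAbs (f j) x / m / l ^ ((q x)⁻¹).toReal)
        = fun x => nnAbs (f j) x / (m * l ^ rE q x) := by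
      funext x
      rw [div_eq_mul_inv, div_eq_mul_inv, div_eq_mul_inv,
        ENNReal.mul_inv (Or.inl hm0) (Or.inl hm), mul_assoc]
      rfl
    rw [harg]
  have hKS : K = sInf {m : ℝ≥0∞ | 0 < m ∧
      mixedModular q p (fun j x => nnAbs (f j) x / m) ≤ 1} := rfl
  -- Step A : positivity of each summand
  have hBpos : ∀ j, 0 < BM p q (nnAbs (f j)) K := by
    intro j
    rcases (show 0 ≤ BM p q (nnAbs (f j)) K from zero_le).eq_or_lt with h0 | h
    · exfalso
      refine psiM_zero_gt hpm hpl hpb hql hqb (hG j) (hGpos j) K ?_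
      refine psiM_le_of_gt hpm hpl hqm (hG j) hK.ne' hKfin (by simp) ?_
      intro l' hl'
      exact psiM_le_of_BM_lt (h0 ▸ hl')
    · exact h
  -- Step B : the sum is at most c ^ Q' for any finite c > 1
  have hsum_le : ∀ c : ℝ≥0∞, 1 < c → c ≠ ∞ →
      (∑' j, BM p q (nnAbs (f j)) K) ≤ c ^ (essSup q volume).toReal := by
    intro c hc1 hc
    have hKc : sInf {m : ℝ≥0∞ | 0 < m ∧
        mixedModular q p (fun j x => nnAbs (f j) x / m) ≤ 1} < c * K := by
      rw [← hKS]
      conv_lhs => rw [← one_mul K]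
      exact ENNReal.mul_lt_mul_left hK.ne' hKfin hc1
    obtain ⟨m, hmS, hmlt⟩ := sInf_lt_iff.mp hKc
    have hKm : K ≤ m := hKS ▸ sInf_le hmS
    have hm0 : m ≠ 0 := (lt_of_lt_of_le hK hKm).ne'
    have hmt : m ≠ ∞ := ne_top_of_lt hmlt
    have hmon : (∑' j, BM p q (nnAbs (f j)) m) ≤ 1 := by
      have h2 := hmS.2
      rwa [hmod m hm0 hmt] at h2
    have hc0 : c ≠ 0 := (lt_of_lt_of_le one_pos hc1.le).ne'
    set c₀ := m / K with hc₀
    have hc₀1 : 1 ≤ c₀ := by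
      rw [hc₀, ENNReal.le_div_iff_mul_le (Or.inl hK.ne') (Or.inl hKfin), one_mul]
      exact hKm
    have hc₀t : c₀ ≠ ∞ := by
      rw [hc₀]; exact (ENNReal.div_lt_top hmt hK.ne').ne
    have hc₀K : c₀ * K = m := by
      rw [hc₀, mul_comm]
      rw [mul_comm]
      exact ENNReal.div_mul_cancel hK.ne' hKfin
    have hc₀c : c₀ ≤ c := by
      rw [hc₀, ENNReal.div_le_iff hK.ne' hKfin]
      exact hmlt.le
    calc (∑' j, BM p q (nnAbs (f j)) K)
        ≤ ∑' j, c ^ (essSup q volume).toReal * BM p q (nnAbs (f j)) m := by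
          refine ENNReal.tsum_le_tsum fun j => ?_
          calc BM p q (nnAbs (f j)) K
              ≤ c₀ ^ (essSup q volume).toReal * BM p q (nnAbs (f j)) (c₀ * K) :=
                BM_le_pow_mul hql hqb hc₀1 hc₀t K
            _ = c₀ ^ (essSup q volume).toReal * BM p q (nnAbs (f j)) m := by rw [hc₀K]
            _ ≤ c ^ (essSup q volume).toReal * BM p q (nnAbs (f j)) m :=
                mul_le_mul_left (ENNReal.rpow_le_rpow hc₀c ENNReal.toReal_nonneg) _
      _ = c ^ (essSup q volume).toReal * ∑' j, BM p q (nnAbs (f j)) m :=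
          ENNReal.tsum_mul_left
      _ ≤ c ^ (essSup q volume).toReal * 1 := mul_le_mul_right hmon _
      _ = c ^ (essSup q volume).toReal := mul_one _
  -- Step B' : the sum is at most 1
  have hsum_le1 : (∑' j, BM p q (nnAbs (f j)) K) ≤ 1 := by
    refine ENNReal.le_of_forall_pos_le_add fun ε hε _ => ?_
    have hεe : ((ε : ℝ≥0∞)) ≠ 0 := by exact_mod_cast hε.ne'
    have h1ε : (1 : ℝ≥0∞) < 1 + ε := ENNReal.lt_add_right one_ne_top hεe
    have h1εt : (1 : ℝ≥0∞) + ε ≠ ∞ := by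
      exact ENNReal.add_ne_top.mpr ⟨one_ne_top, ENNReal.coe_ne_top⟩
    have hc1 : (1 : ℝ≥0∞) < (1 + (ε : ℝ≥0∞)) ^ (1 / (essSup q volume).toReal) := by
      have h := ENNReal.rpow_lt_rpow h1ε
        (show (0:ℝ) < 1 / (essSup q volume).toReal by positivity)
      rwa [ENNReal.one_rpow] at h
    have hct : (1 + (ε : ℝ≥0∞)) ^ (1 / (essSup q volume).toReal) ≠ ∞ :=
      ENNReal.rpow_ne_top_of_nonneg (by positivity) h1εt
    have h := hsum_le _ hc1 hct
    rwa [← ENNReal.rpow_mul, one_div, inv_mul_cancel₀ hQ'pos.ne', ENNReal.rpow_one] at h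
  -- Step C : the sum is at least 1
  have hsum_ge : 1 ≤ ∑' j, BM p q (nnAbs (f j)) K := by
    by_contra hltc
    push_neg at hltc
    set s := ∑' j, BM p q (nnAbs (f j)) K with hs
    have hs0 : s ≠ 0 := by
      intro h0
      exact (hBpos 0).ne' (ENNReal.tsum_eq_zero.mp h0 0)
    have hst : s ≠ ∞ := ne_top_of_lt (hltc.trans ENNReal.one_lt_top)
    set θ := s ^ (1 / (essSup q volume).toReal) with hθdef
    have hθ0 : θ ≠ 0 := (ENNReal.rpow_pos (zero_lt_iff.mpr hs0) hst).ne'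
    have hθ1 : θ < 1 := ENNReal.rpow_lt_one hltc (by positivity)
    have hθt : θ ≠ ∞ := ne_top_of_le_ne_top one_ne_top hθ1.le
    have hθinvt : θ⁻¹ ≠ ∞ := ENNReal.inv_ne_top.mpr hθ0
    have hθinv1 : 1 ≤ θ⁻¹ := ENNReal.one_le_inv.mpr hθ1.le
    have hm'0 : θ * K ≠ 0 := mul_ne_zero hθ0 hK.ne'
    have hm't : θ * K ≠ ∞ := ENNReal.mul_ne_top hθt hKfin
    have hinvm : θ⁻¹ * (θ * K) = K := by
      rw [← mul_assoc, ENNReal.inv_mul_cancel hθ0 hθt, one_mul]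
    have hbound : (∑' j, BM p q (nnAbs (f j)) (θ * K)) ≤ 1 := by
      calc (∑' j, BM p q (nnAbs (f j)) (θ * K))
          ≤ ∑' j, θ⁻¹ ^ (essSup q volume).toReal * BM p q (nnAbs (f j)) K := by
            refine ENNReal.tsum_le_tsum fun j => ?_
            have h := BM_le_pow_mul (p := p) (G := nnAbs (f j)) hql hqb hθinv1 hθinvt (θ * K)
            rwa [hinvm] at h
        _ = θ⁻¹ ^ (essSup q volume).toReal * s := ENNReal.tsum_mul_left
        _ = 1 := by
            rw [hθdef, ENNReal.inv_rpow, ← ENNReal.rpow_mul, one_div,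
              inv_mul_cancel₀ hQ'pos.ne', ENNReal.rpow_one,
              ENNReal.inv_mul_cancel hs0 hst]
    have hS : θ * K ∈ {m : ℝ≥0∞ | 0 < m ∧
        mixedModular q p (fun j x => nnAbs (f j) x / m) ≤ 1} := by
      refine ⟨zero_lt_iff.mpr hm'0, ?_⟩
      rw [hmod _ hm'0 hm't]
      exact hbound
    have hle : K ≤ θ * K := hKS ▸ sInf_le hS
    have hlt2 : θ * K < K := by
      conv_rhs => rw [← one_mul K]
      exact ENNReal.mul_lt_mul_left hK.ne' hKfin hθ1
    exact absurd hle (not_le.mpr hlt2)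
  have hsum : (∑' j, BM p q (nnAbs (f j)) K) = 1 := le_antisymm hsum_le1 hsum_ge
  have hBt : ∀ j, BM p q (nnAbs (f j)) K ≠ ∞ := fun j =>
    ne_top_of_le_ne_top one_ne_top (hsum ▸ ENNReal.le_tsum j)
  refine ⟨hsum, fun j => ?_⟩
  -- attainment for each j
  have hle : psiM p q (nnAbs (f j)) K (BM p q (nnAbs (f j)) K) ≤ 1 := by
    refine psiM_le_of_gt hpm hpl hqm (hG j) hK.ne' hKfin (hBt j) fun l' h => ?_
    exact psiM_le_of_BM_lt h
  refine le_antisymm hle (not_lt.mp fun hlt => ?_)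
  have hcontra : ∀ θ : ℝ≥0∞, θ ≠ 0 → θ < 1 →
      psiM p q (nnAbs (f j)) K (θ * BM p q (nnAbs (f j)) K) ≤ 1 → False := by
    intro θ hθ0 hθ1 hmem
    have hself : BM p q (nnAbs (f j)) K ≤ θ * BM p q (nnAbs (f j)) K :=
      sInf_le ⟨ENNReal.mul_pos hθ0 (hBpos j).ne', hmem⟩
    have hlt2 : θ * BM p q (nnAbs (f j)) K < BM p q (nnAbs (f j)) K := by
      conv_rhs => rw [← one_mul (BM p q (nnAbs (f j)) K)]
      exact ENNReal.mul_lt_mul_left (hBpos j).ne' (hBt j) hθ1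
    exact absurd hself (not_le.mpr hlt2)
  by_cases ha0 : psiM p q (nnAbs (f j)) K (BM p q (nnAbs (f j)) K) = 0
  · refine hcontra 2⁻¹ (by simp) (by simp [ENNReal.inv_lt_one]) ?_
    have h2 := psiM_smul_le (p := p) (q := q) (G := nnAbs (f j)) hpl hql hpb
      (θ := (2 : ℝ≥0∞)⁻¹) (by simp) (ENNReal.inv_le_one.mpr one_le_two)
      K (BM p q (nnAbs (f j)) K)
    rw [ha0, mul_zero] at h2
    exact h2.trans zero_le
  · have hat : psiM p q (nnAbs (f j)) K (BM p q (nnAbs (f j)) K) ≠ ∞ :=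
      ne_top_of_lt (hlt.trans ENNReal.one_lt_top)
    set a := psiM p q (nnAbs (f j)) K (BM p q (nnAbs (f j)) K) with hadef
    set θ := a ^ (1 / (essSup p volume).toReal) with hθdef
    have hθ0 : θ ≠ 0 := (ENNReal.rpow_pos (zero_lt_iff.mpr ha0) hat).ne'
    have hθ1 : θ < 1 := ENNReal.rpow_lt_one hlt (by positivity)
    refine hcontra θ hθ0 hθ1 ?_
    have h2 := psiM_smul_le (p := p) (q := q) (G := nnAbs (f j)) hpl hql hpb hθ0 hθ1.le
      K (BM p q (nnAbs (f j)) K)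
    have heq : θ⁻¹ ^ (essSup p volume).toReal * a = 1 := by
      rw [hθdef, ENNReal.inv_rpow, ← ENNReal.rpow_mul, one_div,
        inv_mul_cancel₀ hP'pos.ne', ENNReal.rpow_one,
        ENNReal.inv_mul_cancel ha0 hat]
    rw [← hadef, heq] at h2
    exact h2
end
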